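/- Let Φ be proper convex lsc and B β-cocoercive with S = {z : 0 ∈ ∂Φ(z) + Bz} ≠ ∅, and suppose 0 < μ < 4β. Then any classical solution x of ẋ(t) + x(t) − prox_{μΦ}(x(t) − μB(x(t))) = 0 satisfies: x(t) converges weakly to some x_∞ ∈ S, B(x(t)) → Bz strongly (Bz the common value of B on S), ẋ(t) → 0, and ∫₀^∞ ‖ẋ(t)‖² dt < ∞. -/

import Mathlib

open scoped RealInnerProductSpace
open MeasureTheory Filter Set

/-- `v` belongs to the convex subdifferential of `Φ` at `x`. -/
def InSubdiff {H : Type*} [NormedAddCommGroup H] [InnerProductSpace ℝ H]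
    (Φ : H → EReal) (x v : H) : Prop :=
  ∀ y : H, Φ x + ((⟪v, y - x⟫ : ℝ) : EReal) ≤ Φ y

section Aux
variable {H : Type*} [NormedAddCommGroup H] [InnerProductSpace ℝ H]

lemma subdiff_mono {Φ : H → EReal} {p q v₁ v₂ : H}
    (h1 : InSubdiff Φ p v₁) (h2 : InSubdiff Φ q v₂)
    (hbot : ∀ u, Φ u ≠ ⊥) (hp : Φ p ≠ ⊤) (hq : Φ q ≠ ⊤) :
    0 ≤ ⟪v₁ - v₂, p - q⟫ := by
  have hp' : ((Φ p).toReal : EReal) = Φ p := EReal.coe_toReal hp (hbot p)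
  have hq' : ((Φ q).toReal : EReal) = Φ q := EReal.coe_toReal hq (hbot q)
  have e1 : (Φ p).toReal + ⟪v₁, q - p⟫ ≤ (Φ q).toReal := by
    have := h1 q
    rw [← hp', ← hq'] at this
    exact_mod_cast this
  have e2 : (Φ q).toReal + ⟪v₂, p - q⟫ ≤ (Φ p).toReal := by
    have := h2 p
    rw [← hp', ← hq'] at this
    exact_mod_cast this
  have h3 : ⟪v₁, q - p⟫ = -⟪v₁, p - q⟫ := by
    rw [← inner_neg_right, neg_sub]
  rw [inner_sub_left]
  linarith


lemma barbalat {f : ℝ → ℝ} {K : ℝ} (hK : 0 < K)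
    (hnn : ∀ t, 0 ≤ t → 0 ≤ f t)
    (hlip : ∀ s t, 0 ≤ s → 0 ≤ t → |f t - f s| ≤ K * |t - s|)
    (hint : IntegrableOn f (Ioi 0)) :
    Tendsto f atTop (nhds 0) := by
  have hii : ∀ a b : ℝ, 0 ≤ a → a ≤ b → IntervalIntegrable f volume a b := by
    intro a b ha hab
    rw [intervalIntegrable_iff, uIoc_of_le hab]
    exact hint.mono_set (fun u hu => lt_of_le_of_lt ha hu.1)
  have key : ∀ ε : ℝ, 0 < ε → ∀ᶠ T in atTop, f T < ε := by
    intro ε hε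
    set δ := ε / (2 * K) with hδdef
    have hδ : 0 < δ := div_pos hε (by linarith)
    have hF : Tendsto (fun T => ∫ s in (0:ℝ)..T, f s) atTop
        (nhds (∫ s in Ioi (0:ℝ), f s)) :=
      intervalIntegral_tendsto_integral_Ioi 0 hint tendsto_id
    have hF2 : Tendsto (fun T => ∫ s in (0:ℝ)..(T + δ), f s) atTop
        (nhds (∫ s in Ioi (0:ℝ), f s)) :=
      hF.comp (tendsto_atTop_add_const_right _ δ tendsto_id)
    have hG : Tendsto (fun T => (∫ s in (0:ℝ)..(T + δ), f s) - ∫ s in (0:ℝ)..T, f s)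
        atTop (nhds 0) := by
      have := hF2.sub hF
      simpa using this
    have hG' : ∀ᶠ T in atTop,
        |(∫ s in (0:ℝ)..(T + δ), f s) - ∫ s in (0:ℝ)..T, f s| < ε * δ / 2 := by
      have := hG.eventually (eventually_abs_sub_lt 0 (by positivity : (0:ℝ) < ε * δ / 2))
      simpa using this
    filter_upwards [hG', eventually_ge_atTop (0:ℝ)] with T hT hT0
    by_contra hcon
    push_neg at hcon
    -- On [T, T+δ], f ≥ ε/2
    have hlow : ∀ u ∈ Ioc T (T + δ), ε / 2 ≤ f u := by
      intro u hu
      have hu0 : 0 ≤ u := le_trans hT0 hu.1.le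
      have h1 : |f u - f T| ≤ K * |u - T| := hlip T u hT0 hu0
      have h2 : |u - T| ≤ δ := by
        rw [abs_of_nonneg (by linarith [hu.1.le] : (0:ℝ) ≤ u - T)]
        linarith [hu.2]
      have h3 : f T - f u ≤ K * δ := by
        have := abs_le.1 h1
        nlinarith [this.1, this.2, hK.le]
      have hKδ : K * δ = ε / 2 := by
        rw [hδdef]; field_simp
      linarith
    have hIioc : (∫ s in (0:ℝ)..(T + δ), f s) - ∫ s in (0:ℝ)..T, f s
        = ∫ s in Ioc T (T + δ), f s := by
      rw [intervalIntegral.integral_interval_sub_left (hii 0 (T + δ) le_rfl (by linarith))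
        (hii 0 T le_rfl hT0),
        intervalIntegral.integral_of_le (by linarith : T ≤ T + δ)]
    have hfint : IntegrableOn f (Ioc T (T + δ)) :=
      hint.mono_set (fun u hu => lt_of_le_of_lt hT0 hu.1)
    have hlb : ε / 2 * δ ≤ ∫ s in Ioc T (T + δ), f s := by
      have hconst : ∫ _s in Ioc T (T + δ), (ε / 2) = ε / 2 * δ := by
        simp [Real.volume_Ioc]
        rw [max_eq_left hδ.le]
        ring
      calc ε / 2 * δ = ∫ _s in Ioc T (T + δ), (ε / 2) := hconst.symm
        _ ≤ ∫ s in Ioc T (T + δ), f s := by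
            refine setIntegral_mono_on (integrableOn_const ?_) hfint measurableSet_Ioc hlow
            rw [Real.volume_Ioc]; exact ENNReal.ofReal_ne_top
    rw [hIioc] at hT
    have : |∫ s in Ioc T (T + δ), f s| ≥ ε / 2 * δ := le_trans hlb (le_abs_self _)
    have hεδ : ε * δ / 2 = ε / 2 * δ := by ring
    linarith [hT, hεδ ▸ hT]
  rw [Metric.tendsto_nhds]
  intro ε hε
  filter_upwards [key ε hε, eventually_ge_atTop (0:ℝ)] with T hT hT0
  rw [Real.dist_eq, sub_zero, abs_of_nonneg (hnn T hT0)]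
  exact hT

end Aux

section Aux2
variable {H : Type*} [NormedAddCommGroup H] [InnerProductSpace ℝ H] [CompleteSpace H]

lemma exists_weak_lim (G : Ultrafilter ℝ) (x : ℝ → H) (C : ℝ)
    (hC : ∀ᶠ t in (G : Filter ℝ), ‖x t‖ ≤ C) :
    ∃ xinf : H, ∀ w : H, Tendsto (fun t => ⟪x t, w⟫) (G : Filter ℝ) (nhds ⟪xinf, w⟫) := by
  have hlim : ∀ w : H, ∃ c : ℝ, Tendsto (fun t => ⟪x t, w⟫) (G : Filter ℝ) (nhds c) := by
    intro w
    have hb : ∀ᶠ t in (G : Filter ℝ), (⟪x t, w⟫ : ℝ) ∈ Icc (-(C * ‖w‖)) (C * ‖w‖) := by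
      filter_upwards [hC] with t ht
      have h1 : |(⟪x t, w⟫ : ℝ)| ≤ C * ‖w‖ := by
        refine (abs_real_inner_le_norm _ _).trans ?_
        exact mul_le_mul_of_nonneg_right ht (norm_nonneg _)
      exact abs_le.1 h1
    have hmem : Icc (-(C * ‖w‖)) (C * ‖w‖) ∈ (G.map fun t => (⟪x t, w⟫ : ℝ)) := hb
    obtain ⟨c, -, hc⟩ := isCompact_Icc.ultrafilter_le_nhds
      (G.map fun t => (⟪x t, w⟫ : ℝ)) (le_principal_iff.2 hmem)
    exact ⟨c, hc⟩
  choose c hc using hlim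
  have hadd : ∀ w w' : H, c (w + w') = c w + c w' := by
    intro w w'
    refine tendsto_nhds_unique (hc (w + w')) ?_
    have := (hc w).add (hc w')
    simpa [inner_add_right] using this
  have hsmul : ∀ (a : ℝ) (w : H), c (a • w) = a * c w := by
    intro a w
    refine tendsto_nhds_unique (hc (a • w)) ?_
    have := (hc w).const_mul a
    simpa [inner_smul_right] using this
  have hbound : ∀ w : H, ‖c w‖ ≤ C * ‖w‖ := by
    intro w
    rw [Real.norm_eq_abs]
    refine le_of_tendsto (hc w).abs ?_
    filter_upwards [hC] with t ht
    refine (abs_real_inner_le_norm _ _).trans ?_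
    exact mul_le_mul_of_nonneg_right ht (norm_nonneg _)
  let ℓ : H →L[ℝ] ℝ := LinearMap.mkContinuous
    { toFun := c, map_add' := hadd, map_smul' := hsmul } C hbound
  refine ⟨(InnerProductSpace.toDual ℝ H).symm ℓ, fun w => ?_⟩
  have : ⟪(InnerProductSpace.toDual ℝ H).symm ℓ, w⟫ = ℓ w :=
    InnerProductSpace.toDual_symm_apply
  rw [this]
  exact hc w

lemma mem_of_weak_tendsto (L : Filter ℝ) [L.NeBot] {C : Set H} (hC : Convex ℝ C)
    (hCc : IsClosed C) {p : ℝ → H} {q : H}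
    (hw : ∀ w : H, Tendsto (fun t => ⟪w, p t⟫) L (nhds ⟪w, q⟫))
    (hmem : ∀ᶠ t in L, p t ∈ C) : q ∈ C := by
  by_contra hq
  obtain ⟨f, u, hfx, hfb⟩ := geometric_hahn_banach_point_closed hC hCc hq
  set w := (InnerProductSpace.toDual ℝ H).symm f with hwdef
  have hfw : ∀ y, f y = ⟪w, y⟫ := fun y => (InnerProductSpace.toDual_symm_apply).symm
  have hle : u ≤ ⟪w, q⟫ := by
    refine ge_of_tendsto (hw w) ?_
    filter_upwards [hmem] with t ht
    have := (hfb _ ht).le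
    rwa [hfw] at this
  rw [← hfw] at hle
  linarith


end Aux2

set_option maxHeartbeats 1000000 in
theorem proximal_gradient_dynamic_convergence
    {H : Type*} [NormedAddCommGroup H] [InnerProductSpace ℝ H] [CompleteSpace H]
    (Φ : H → EReal)
    (hproper : (∀ x, Φ x ≠ ⊥) ∧ ∃ x, Φ x ≠ ⊤)
    (hconvex : ∀ x y : H, ∀ a b : ℝ, 0 ≤ a → 0 ≤ b → a + b = 1 →
      Φ (a • x + b • y) ≤ (a : EReal) * Φ x + (b : EReal) * Φ y)
    (hlsc : LowerSemicontinuous Φ)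
    (β : ℝ) (hβ : 0 < β) (B : H → H)
    (hcoco : ∀ x y : H, β * ‖B x - B y‖ ^ 2 ≤ ⟪B x - B y, x - y⟫)
    (μ : ℝ) (hμ0 : 0 < μ) (hμβ : μ < 4 * β)
    (prox : H → H)
    (hprox : ∀ w : H, InSubdiff Φ (prox w) ((1 / μ) • (w - prox w)))
    (hS : ∃ z : H, InSubdiff Φ z (-B z))
    (x x' : ℝ → H)
    (hderiv : ∀ t : ℝ, HasDerivAt x (x' t) t)
    (heq : ∀ t : ℝ, 0 ≤ t → x' t + x t - prox (x t - μ • B (x t)) = 0) :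
    ∃ xinf : H, InSubdiff Φ xinf (-B xinf) ∧
      (∀ w : H, Tendsto (fun t => ⟪x t, w⟫) atTop (nhds ⟪xinf, w⟫)) ∧
      Tendsto (fun t => B (x t)) atTop (nhds (B xinf)) ∧
      Tendsto x' atTop (nhds 0) ∧
      IntegrableOn (fun t => ‖x' t‖ ^ 2) (Ioi (0 : ℝ)) := by
  obtain ⟨hbot, x₁, hx₁⟩ := hproper
  obtain ⟨z, hz⟩ := hS
  -- Basic finiteness facts
  have hproxtop : ∀ w, Φ (prox w) ≠ ⊤ := by
    intro w hw
    have := hprox w x₁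
    rw [hw] at this
    rw [EReal.top_add_of_ne_bot (by exact_mod_cast EReal.coe_ne_bot _)] at this
    exact hx₁ (top_le_iff.1 this)
  have hStop : ∀ z' : H, InSubdiff Φ z' (-B z') → Φ z' ≠ ⊤ := by
    intro z' hz' hw
    have := hz' (prox 0)
    rw [hw] at this
    rw [EReal.top_add_of_ne_bot (by exact_mod_cast EReal.coe_ne_bot _)] at this
    exact hproxtop 0 (top_le_iff.1 this)
  have hztop : Φ z ≠ ⊤ := hStop z hz
  -- prox is nonexpansive
  have hprox_firm : ∀ u v : H, ‖prox u - prox v‖ ^ 2 ≤ ⟪u - v, prox u - prox v⟫ := by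
    intro u v
    have h0 := subdiff_mono (hprox u) (hprox v) hbot (hproxtop u) (hproxtop v)
    have hrw : (1 / μ) • (u - prox u) - (1 / μ) • (v - prox v)
        = (1 / μ) • ((u - v) - (prox u - prox v)) := by
      rw [← smul_sub]; congr 1; abel
    rw [hrw, real_inner_smul_left] at h0
    have h1 : 0 ≤ ⟪(u - v) - (prox u - prox v), prox u - prox v⟫ :=
      nonneg_of_mul_nonneg_right h0 (by positivity)
    rw [inner_sub_left, real_inner_self_eq_norm_sq] at h1
    linarith [real_inner_comm (u - v) (prox u - prox v)]
  have hprox_ne : ∀ u v : H, ‖prox u - prox v‖ ≤ ‖u - v‖ := by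
    intro u v
    rcases eq_or_ne (prox u - prox v) 0 with h | h
    · rw [h, norm_zero]; positivity
    · have h2 := (hprox_firm u v).trans (real_inner_le_norm _ _)
      have h3 : 0 < ‖prox u - prox v‖ := norm_pos_iff.2 h
      nlinarith
  -- B is Lipschitz
  have hBlip : ∀ u v : H, ‖B u - B v‖ ≤ (1 / β) * ‖u - v‖ := by
    intro u v
    rcases eq_or_ne (B u - B v) 0 with h | h
    · rw [h, norm_zero]; positivity
    · have h2 := (hcoco u v).trans (real_inner_le_norm _ _)
      have h3 : 0 < ‖B u - B v‖ := norm_pos_iff.2 h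
      rw [div_mul_eq_mul_div, le_div_iff₀ hβ, mul_comm]
      nlinarith
  -- z is a fixed point of the forward-backward map
  have hzfix : prox (z - μ • B z) = z := by
    have h0 := subdiff_mono (hprox (z - μ • B z)) hz hbot (hproxtop _) hztop
    set p := prox (z - μ • B z)
    have hrw : (1 / μ) • ((z - μ • B z) - p) - (-B z) = (1 / μ) • (z - p) := by
      have hμ' : μ ≠ 0 := ne_of_gt hμ0
      match_scalars <;> field_simp <;> ring
    rw [hrw, real_inner_smul_left] at h0
    have h1 : 0 ≤ ⟪z - p, p - z⟫ := nonneg_of_mul_nonneg_right h0 (by positivity)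
    have h2 : ⟪z - p, p - z⟫ = -‖p - z‖ ^ 2 := by
      rw [show z - p = -(p - z) by abel, inner_neg_left, real_inner_self_eq_norm_sq]
    rw [h2] at h1
    have h3 : ‖p - z‖ = 0 := by nlinarith [norm_nonneg (p - z)]
    have := norm_eq_zero.1 h3
    rwa [sub_eq_zero] at this

  -- Notation
  set Q : ℝ → H := fun t => prox (x t - μ • B (x t)) with hQdef
  set D : ℝ → H := fun t => Q t - x t with hDdef
  have hx'D : ∀ t : ℝ, 0 ≤ t → x' t = D t := by
    intro t ht
    have := heq t ht
    have h1 : x' t = Q t - x t := by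
      rw [hQdef]
      rw [sub_eq_zero] at this
      simp only []
      rw [← this]
      abel
    rw [h1]
  -- Continuity
  have hxc : Continuous x := by
    rw [continuous_iff_continuousAt]
    exact fun t => (hderiv t).continuousAt
  have hBc : Continuous B := by
    have : LipschitzWith (Real.toNNReal (1 / β)) B := by
      apply LipschitzWith.of_dist_le_mul
      intro u v
      rw [dist_eq_norm, dist_eq_norm]
      refine (hBlip u v).trans ?_
      gcongr
      exact Real.le_coe_toNNReal _
    exact this.continuous
  have hproxc : Continuous prox := by
    have : LipschitzWith 1 prox := by
      apply LipschitzWith.of_dist_le_mul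
      intro u v
      rw [dist_eq_norm, dist_eq_norm, NNReal.coe_one, one_mul]
      exact hprox_ne u v
    exact this.continuous
  have hQc : Continuous Q :=
    hproxc.comp (hxc.sub ((hBc.comp hxc).const_smul μ))
  have hDc : Continuous D := hQc.sub hxc
  -- The quadratic-form constant
  obtain ⟨ε, hε, hε1, hεβ, hquad⟩ :
      ∃ ε : ℝ, 0 < ε ∧ ε ≤ 1 ∧ ε ≤ μ * β ∧
        ∀ dd gg : ℝ, 0 ≤ dd → 0 ≤ gg →
          μ * gg * dd ≤ (1 - ε) * dd ^ 2 + (μ * β - ε) * gg ^ 2 := by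
    set θ : ℝ := (4 * β + μ) / (8 * β) with hθdef
    have hθpos : 0 < θ := by positivity
    have hθlt1 : θ < 1 := by
      rw [hθdef, div_lt_one (by positivity)]
      linarith
    have hd2 : μ ^ 2 / (4 * θ) < μ * β := by
      rw [div_lt_iff₀ (by positivity), hθdef]
      rw [show μ * β * (4 * ((4 * β + μ) / (8 * β))) = μ * β * (4 * (4 * β + μ)) / (8 * β) by ring]
      rw [lt_div_iff₀ (by positivity)]
      nlinarith [mul_pos (show (0:ℝ) < 4 * β - μ by linarith) (show (0:ℝ) < 4 * β * μ by positivity)]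
    set ε : ℝ := min (1 - θ) (μ * β - μ ^ 2 / (4 * θ)) with hεdef
    have hεpos : 0 < ε := lt_min (by linarith) (by linarith)
    refine ⟨ε, hεpos, ?_, ?_, ?_⟩
    · have := min_le_left (1 - θ) (μ * β - μ ^ 2 / (4 * θ))
      rw [← hεdef] at this
      linarith
    · have := min_le_right (1 - θ) (μ * β - μ ^ 2 / (4 * θ))
      rw [← hεdef] at this
      have : μ ^ 2 / (4 * θ) ≥ 0 := by positivity
      linarith [min_le_right (1 - θ) (μ * β - μ ^ 2 / (4 * θ))]
    · intro dd gg hdd hgg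
      have hmid : μ * gg * dd ≤ θ * dd ^ 2 + (μ ^ 2 / (4 * θ)) * gg ^ 2 := by
        have hsq : θ * dd ^ 2 + (μ ^ 2 / (4 * θ)) * gg ^ 2 - μ * gg * dd
            = (θ * dd - (μ / 2) * gg) ^ 2 / θ := by
          field_simp
          ring
        nlinarith [sq_nonneg (θ * dd - (μ / 2) * gg), div_nonneg (sq_nonneg (θ * dd - (μ / 2) * gg)) hθpos.le]
      have h1 : θ ≤ 1 - ε := by
        have := min_le_left (1 - θ) (μ * β - μ ^ 2 / (4 * θ))
        rw [← hεdef] at this; linarith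
      have h2 : μ ^ 2 / (4 * θ) ≤ μ * β - ε := by
        have := min_le_right (1 - θ) (μ * β - μ ^ 2 / (4 * θ))
        rw [← hεdef] at this; linarith
      nlinarith [sq_nonneg dd, sq_nonneg gg]
  -- Key pointwise inequality
  have hkey : ∀ z' : H, InSubdiff Φ z' (-B z') → ∀ t : ℝ,
      ⟪D t, x t - z'⟫ ≤ -ε * (‖D t‖ ^ 2 + ‖B (x t) - B z'‖ ^ 2) := by
    intro z' hz' t
    set g' : H := B (x t) - B z' with hg'def
    have h0 := subdiff_mono (hprox (x t - μ • B (x t))) hz' hbot (hproxtop _) (hStop z' hz')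
    have hrw : (1 / μ) • ((x t - μ • B (x t)) - Q t) - (-B z')
        = (-(1 / μ)) • D t - g' := by
      rw [hDdef, hg'def]
      have hμ' : μ ≠ 0 := ne_of_gt hμ0
      match_scalars <;> field_simp
    have hrw2 : Q t - z' = (x t - z') + D t := by simp only [hDdef]; abel
    rw [hrw, hrw2] at h0
    rw [inner_sub_left, inner_add_right, inner_add_right, real_inner_smul_left,
      real_inner_smul_left, real_inner_self_eq_norm_sq] at h0
    have h0' : (1/μ) * ⟪D t, x t - z'⟫ + (1/μ) * ‖D t‖^2 + ⟪g', x t - z'⟫ + ⟪g', D t⟫ ≤ 0 := by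
      linarith [h0]
    have h0'' : ⟪D t, x t - z'⟫ + ‖D t‖^2 + μ * ⟪g', x t - z'⟫ + μ * ⟪g', D t⟫ ≤ 0 := by
      have hm := mul_le_mul_of_nonneg_left h0' hμ0.le
      rw [mul_zero] at hm
      have hc : μ * ((1/μ) * ⟪D t, x t - z'⟫ + (1/μ) * ‖D t‖^2 + ⟪g', x t - z'⟫ + ⟪g', D t⟫)
          = ⟪D t, x t - z'⟫ + ‖D t‖^2 + μ * ⟪g', x t - z'⟫ + μ * ⟪g', D t⟫ := by
        field_simp
      linarith [hc ▸ hm]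
    have hco : β * ‖g'‖ ^ 2 ≤ ⟪g', x t - z'⟫ := hcoco (x t) z'
    have hgd : -⟪g', D t⟫ ≤ ‖g'‖ * ‖D t‖ := by
      have h1 := abs_real_inner_le_norm g' (D t)
      have h2 := abs_le.1 h1
      linarith [h2.1]
    have hq := hquad (‖D t‖) (‖g'‖) (norm_nonneg _) (norm_nonneg _)
    have hco' := mul_le_mul_of_nonneg_left hco hμ0.le
    have hgd' := mul_le_mul_of_nonneg_left hgd hμ0.le
    linarith [h0'', hco', hgd', hq]

  -- Lyapunov: derivative of t ↦ ‖x t - z'‖²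
  have hderivh : ∀ (z' : H) (t : ℝ),
      HasDerivAt (fun s => ‖x s - z'‖ ^ 2) (2 * ⟪x' t, x t - z'⟫) t := by
    intro z' t
    have h1 : HasDerivAt (fun s => x s - z') (x' t) t := (hderiv t).sub_const z'
    have h2 := h1.inner ℝ h1
    have h3 : (fun s => ‖x s - z'‖ ^ 2) = fun s => ⟪x s - z', x s - z'⟫ := by
      funext s
      rw [real_inner_self_eq_norm_sq]
    rw [h3]
    exact h2.congr_deriv (by rw [real_inner_comm]; ring)
  -- antitone on [0, ∞)
  have hmono : ∀ z' : H, InSubdiff Φ z' (-B z') →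
      AntitoneOn (fun s => ‖x s - z'‖ ^ 2) (Ici (0:ℝ)) := by
    intro z' hz'
    apply antitoneOn_of_deriv_nonpos (convex_Ici 0)
    · exact (Continuous.continuousOn (by continuity))
    · intro t ht
      exact ((hderivh z' t).differentiableAt).differentiableWithinAt
    · intro t ht
      rw [interior_Ici] at ht
      rw [(hderivh z' t).deriv]
      have ht0 : (0:ℝ) ≤ t := le_of_lt ht
      rw [hx'D t ht0]
      have := hkey z' hz' t
      nlinarith [norm_nonneg (D t), norm_nonneg (B (x t) - B z'), sq_nonneg (‖D t‖),
        sq_nonneg (‖B (x t) - B z'‖), hε]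
  -- bounds along the trajectory
  set R : ℝ := ‖x 0 - z‖ with hRdef
  have hR0 : 0 ≤ R := hRdef ▸ norm_nonneg _
  have hxb : ∀ t : ℝ, 0 ≤ t → ‖x t - z‖ ≤ R := by
    intro t ht
    have h1 : ‖x t - z‖ ^ 2 ≤ R ^ 2 := by
      rw [hRdef]
      simpa using hmono z hz (self_mem_Ici) ht ht
    nlinarith [norm_nonneg (x t - z), h1, hR0]
  have hgb : ∀ t : ℝ, 0 ≤ t → ‖B (x t) - B z‖ ≤ (1 / β) * R := by
    intro t ht
    refine (hBlip (x t) z).trans ?_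
    have := hxb t ht
    gcongr
  set MD : ℝ := (2 + μ / β) * R with hMDdef
  have hMD0 : 0 ≤ MD := by
    have : (0:ℝ) ≤ R := norm_nonneg _
    have h2 : (0:ℝ) ≤ 2 + μ / β := by positivity
    positivity
  have hDb : ∀ t : ℝ, 0 ≤ t → ‖D t‖ ≤ MD := by
    intro t ht
    have h1 : ‖D t‖ ≤ ‖Q t - z‖ + ‖x t - z‖ := by
      have hsplit : D t = (Q t - z) - (x t - z) := by
        simp only [hDdef]
        abel
      rw [hsplit]
      exact norm_sub_le _ _
    have h2 : ‖Q t - z‖ ≤ (1 + μ / β) * ‖x t - z‖ := by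
      have h3 : Q t - z = prox (x t - μ • B (x t)) - prox (z - μ • B z) := by
        simp only [hQdef, hzfix]
      rw [h3]
      refine (hprox_ne _ _).trans ?_
      have h4 : (x t - μ • B (x t)) - (z - μ • B z) = (x t - z) - μ • (B (x t) - B z) := by
        rw [smul_sub]; abel
      rw [h4]
      refine (norm_sub_le _ _).trans ?_
      rw [norm_smul, Real.norm_eq_abs, abs_of_pos hμ0]
      have h5 := hBlip (x t) z
      have h6 : μ * ‖B (x t) - B z‖ ≤ μ * ((1/β) * ‖x t - z‖) := by
        exact mul_le_mul_of_nonneg_left h5 hμ0.le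
      have h7 : μ * ((1/β) * ‖x t - z‖) = (μ / β) * ‖x t - z‖ := by ring
      rw [h7] at h6
      linarith
    have h8 := hxb t ht
    have h9 : (0:ℝ) ≤ 1 + μ / β := by positivity
    rw [hMDdef]
    nlinarith [norm_nonneg (x t - z)]

  -- Energy estimate via FTC
  set ψ : ℝ → ℝ := fun t => ‖D t‖ ^ 2 + ‖B (x t) - B z‖ ^ 2 with hψdef
  have hgc : Continuous (fun t => B (x t) - B z) := (hBc.comp hxc).sub continuous_const
  have hψc : Continuous ψ := ((hDc.norm.pow 2).add ((hgc.norm).pow 2))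
  have hψ0 : ∀ t, 0 ≤ ψ t := by
    intro t
    simp only [hψdef]
    positivity
  have hcont2 : Continuous (fun t => 2 * ⟪D t, x t - z⟫) :=
    continuous_const.mul (hDc.inner (hxc.sub continuous_const))
  have hε2 : (0:ℝ) < 2 * ε := by linarith
  have hFTC : ∀ T : ℝ, 0 ≤ T → ∫ t in (0:ℝ)..T, ψ t ≤ R ^ 2 / (2 * ε) := by
    intro T hT
    have hde : ∀ t ∈ uIcc (0:ℝ) T, HasDerivAt (fun s => ‖x s - z‖ ^ 2) (2 * ⟪D t, x t - z⟫) t := by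
      intro t ht
      rw [uIcc_of_le hT] at ht
      have h1 := hderivh z t
      rwa [hx'D t ht.1] at h1
    have heqFTC := intervalIntegral.integral_eq_sub_of_hasDerivAt hde
      (hcont2.intervalIntegrable 0 T)
    have hmono_int : ∫ t in (0:ℝ)..T, 2 * ⟪D t, x t - z⟫
        ≤ ∫ t in (0:ℝ)..T, (-2 * ε) * ψ t := by
      apply intervalIntegral.integral_mono_on hT (hcont2.intervalIntegrable 0 T)
        ((continuous_const.mul hψc).intervalIntegrable 0 T)
      intro u hu
      have h2 := hkey z hz u
      show 2 * ⟪D u, x u - z⟫ ≤ -2 * ε * ψ u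
      simp only [hψdef]
      nlinarith [h2]
    have hcm : ∫ t in (0:ℝ)..T, (-2 * ε) * ψ t = (-2 * ε) * ∫ t in (0:ℝ)..T, ψ t :=
      intervalIntegral.integral_const_mul _ _
    have h3 : (0:ℝ) ≤ ‖x T - z‖ ^ 2 := by positivity
    have h4 : ‖x 0 - z‖ ^ 2 = R ^ 2 := by rw [hRdef]
    rw [le_div_iff₀ hε2]
    nlinarith [heqFTC, hmono_int, h3, h4, hcm]
  have hψint : IntegrableOn ψ (Ioi 0) := by
    apply integrableOn_Ioi_of_intervalIntegral_norm_bounded (R ^ 2 / (2 * ε)) 0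
      (fun i => hψc.integrableOn_Ioc) tendsto_id
    filter_upwards [eventually_ge_atTop (0:ℝ)] with i hi
    have hcongr : ∫ t in (0:ℝ)..(id i), ‖ψ t‖ = ∫ t in (0:ℝ)..(id i), ψ t := by
      apply intervalIntegral.integral_congr
      intro u _
      show ‖ψ u‖ = ψ u
      rw [Real.norm_eq_abs, abs_of_nonneg (hψ0 u)]
    rw [hcongr]
    exact hFTC i hi
  have hD2int : IntegrableOn (fun t => ‖D t‖ ^ 2) (Ioi 0) := by
    apply Integrable.mono' hψint ((hDc.norm.pow 2).aestronglyMeasurable.restrict)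
    refine ae_of_all _ (fun t => ?_)
    have hn : ‖‖D t‖ ^ 2‖ = ‖D t‖ ^ 2 := by
      rw [Real.norm_eq_abs, abs_of_nonneg (by positivity : (0:ℝ) ≤ ‖D t‖ ^ 2)]
    show ‖‖D t‖ ^ 2‖ ≤ ψ t
    rw [hn]
    have h5 : (0:ℝ) ≤ ‖B (x t) - B z‖ ^ 2 := by positivity
    simp only [hψdef]
    linarith
  have hg2int : IntegrableOn (fun t => ‖B (x t) - B z‖ ^ 2) (Ioi 0) := by
    apply Integrable.mono' hψint ((hgc.norm.pow 2).aestronglyMeasurable.restrict)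
    refine ae_of_all _ (fun t => ?_)
    have hn : ‖‖B (x t) - B z‖ ^ 2‖ = ‖B (x t) - B z‖ ^ 2 := by
      rw [Real.norm_eq_abs, abs_of_nonneg (by positivity : (0:ℝ) ≤ ‖B (x t) - B z‖ ^ 2)]
    show ‖‖B (x t) - B z‖ ^ 2‖ ≤ ψ t
    rw [hn]
    have h5 : (0:ℝ) ≤ ‖D t‖ ^ 2 := by positivity
    simp only [hψdef]
    linarith
  have hx'int : IntegrableOn (fun t => ‖x' t‖ ^ 2) (Ioi 0) := by
    refine IntegrableOn.congr_fun hD2int ?_ measurableSet_Ioi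
    intro t ht
    show ‖D t‖ ^ 2 = ‖x' t‖ ^ 2
    rw [hx'D t (le_of_lt (mem_Ioi.1 ht))]
  -- Lipschitz-in-time estimates
  have hxlip : ∀ s t : ℝ, 0 ≤ s → 0 ≤ t → ‖x t - x s‖ ≤ MD * |t - s| := by
    intro s t hs ht
    have h6 := Convex.norm_image_sub_le_of_norm_hasDerivWithin_le (f := x) (f' := x')
      (fun u hu => (hderiv u).hasDerivWithinAt)
      (fun u hu => by rw [hx'D u hu]; exact hDb u hu) (convex_Ici 0) hs ht
    simpa [Real.norm_eq_abs] using h6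
  have hQlip : ∀ s t : ℝ, 0 ≤ s → 0 ≤ t → ‖Q t - Q s‖ ≤ (1 + μ / β) * (MD * |t - s|) := by
    intro s t hs ht
    have h7 : ‖Q t - Q s‖ ≤ ‖(x t - μ • B (x t)) - (x s - μ • B (x s))‖ := by
      simp only [hQdef]
      exact hprox_ne _ _
    have h8 : (x t - μ • B (x t)) - (x s - μ • B (x s)) = (x t - x s) - μ • (B (x t) - B (x s)) := by
      rw [smul_sub]; abel
    rw [h8] at h7
    refine h7.trans ?_
    refine (norm_sub_le _ _).trans ?_
    rw [norm_smul, Real.norm_eq_abs, abs_of_pos hμ0]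
    have h9 := hBlip (x t) (x s)
    have h10 := hxlip s t hs ht
    have h11 : μ * ‖B (x t) - B (x s)‖ ≤ μ * (1/β * ‖x t - x s‖) :=
      mul_le_mul_of_nonneg_left h9 hμ0.le
    have h12 : μ/β * ‖x t - x s‖ ≤ μ/β * (MD * |t - s|) :=
      mul_le_mul_of_nonneg_left h10 (by positivity)
    have h13 : μ * (1/β * ‖x t - x s‖) = μ/β * ‖x t - x s‖ := by ring
    have h14 : (1 + μ/β) * (MD * |t - s|) = MD * |t - s| + μ/β * (MD * |t - s|) := by ring
    linarith
  have hDlip : ∀ s t : ℝ, 0 ≤ s → 0 ≤ t → ‖D t - D s‖ ≤ ((2 + μ / β) * MD) * |t - s| := by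
    intro s t hs ht
    have h12 : D t - D s = (Q t - Q s) - (x t - x s) := by
      simp only [hDdef]; abel
    rw [h12]
    refine (norm_sub_le _ _).trans ?_
    have h13 := hQlip s t hs ht
    have h14 := hxlip s t hs ht
    have h15 : (1 + μ/β) * (MD * |t - s|) + MD * |t - s| = ((2 + μ / β) * MD) * |t - s| := by ring
    linarith
  have hBxlip : ∀ s t : ℝ, 0 ≤ s → 0 ≤ t →
      ‖B (x t) - B (x s)‖ ≤ ((1 / β) * MD) * |t - s| := by
    intro s t hs ht
    refine (hBlip (x t) (x s)).trans ?_
    have h15 := hxlip s t hs ht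
    have h16 : 1/β * ‖x t - x s‖ ≤ 1/β * (MD * |t - s|) :=
      mul_le_mul_of_nonneg_left h15 (by positivity)
    have h17 : 1/β * (MD * |t - s|) = ((1 / β) * MD) * |t - s| := by ring
    linarith
  -- Barbalat: strong convergences
  have sqlip : ∀ (F : ℝ → H) (M K : ℝ), 0 ≤ M → 0 ≤ K →
      (∀ t : ℝ, 0 ≤ t → ‖F t‖ ≤ M) →
      (∀ s t : ℝ, 0 ≤ s → 0 ≤ t → ‖F t - F s‖ ≤ K * |t - s|) →
      (IntegrableOn (fun t => ‖F t‖ ^ 2) (Ioi 0)) →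
      Tendsto (fun t => ‖F t‖ ^ 2) atTop (nhds 0) := by
    intro F M K hM hK hFb hFlip hFint
    apply barbalat (K := 2 * M * K + 1)
    · positivity
    · intro t _; positivity
    · intro s t hs ht
      have h17 : ‖F t‖ ^ 2 - ‖F s‖ ^ 2 = (‖F t‖ - ‖F s‖) * (‖F t‖ + ‖F s‖) := by ring
      rw [h17, abs_mul]
      have h18 : |‖F t‖ - ‖F s‖| ≤ K * |t - s| := (abs_norm_sub_norm_le _ _).trans (hFlip s t hs ht)
      have h19 : |‖F t‖ + ‖F s‖| ≤ 2 * M := by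
        rw [abs_of_nonneg (by positivity)]
        linarith [hFb t ht, hFb s hs]
      calc |‖F t‖ - ‖F s‖| * |‖F t‖ + ‖F s‖| ≤ (K * |t - s|) * (2 * M) := by
            apply mul_le_mul h18 h19 (abs_nonneg _) (by positivity)
        _ ≤ (2 * M * K + 1) * |t - s| := by nlinarith [abs_nonneg (t - s)]
    · exact hFint
  have hD2to0 : Tendsto (fun t => ‖D t‖ ^ 2) atTop (nhds 0) :=
    sqlip D MD ((2 + μ / β) * MD) hMD0 (by positivity) hDb hDlip hD2int
  have hg2to0 : Tendsto (fun t => ‖B (x t) - B z‖ ^ 2) atTop (nhds 0) := by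
    refine sqlip (fun t => B (x t) - B z) ((1/β) * R) ((1 / β) * MD) (by positivity) (by positivity)
      hgb ?_ hg2int
    intro s t hs ht
    have h20 : (B (x t) - B z) - (B (x s) - B z) = B (x t) - B (x s) := by abel
    rw [h20]
    exact hBxlip s t hs ht
  have normto0 : ∀ (F : ℝ → H), Tendsto (fun t => ‖F t‖ ^ 2) atTop (nhds 0) →
      Tendsto F atTop (nhds 0) := by
    intro F hF2
    rw [tendsto_zero_iff_norm_tendsto_zero]
    have h21 := hF2.sqrt
    rw [Real.sqrt_zero] at h21
    refine h21.congr (fun t => ?_)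
    rw [Real.sqrt_sq (norm_nonneg _)]
  have hDto0 : Tendsto D atTop (nhds 0) := normto0 D hD2to0
  have hgto0 : Tendsto (fun t => B (x t) - B z) atTop (nhds 0) := normto0 _ hg2to0
  have hBxz : Tendsto (fun t => B (x t)) atTop (nhds (B z)) := by
    rw [← tendsto_sub_nhds_zero_iff]
    exact hgto0
  have hx'to0 : Tendsto x' atTop (nhds 0) := by
    refine hDto0.congr' ?_
    filter_upwards [eventually_ge_atTop (0:ℝ)] with t ht
    exact (hx'D t ht).symm

  -- boundedness of the trajectory
  have hxnb : ∀ t : ℝ, 0 ≤ t → ‖x t‖ ≤ R + ‖z‖ := by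
    intro t ht
    calc ‖x t‖ = ‖(x t - z) + z‖ := by rw [sub_add_cancel]
      _ ≤ ‖x t - z‖ + ‖z‖ := norm_add_le _ _
      _ ≤ R + ‖z‖ := by linarith [hxb t ht]
  -- existence of limits of ‖x t - z'‖² for z' ∈ S
  have hconv : ∀ z' : H, InSubdiff Φ z' (-B z') →
      ∃ c : ℝ, Tendsto (fun t => ‖x t - z'‖ ^ 2) atTop (nhds c) := by
    intro z' hz'
    set f : ℝ → ℝ := fun t => ‖x (max t 0) - z'‖ ^ 2 with hfdef
    have hanti : Antitone f := by
      intro s t hst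
      simpa using hmono z' hz' (mem_Ici.2 (le_max_right s 0)) (mem_Ici.2 (le_max_right t 0))
        (max_le_max hst le_rfl)
    have hbdd : BddBelow (range f) := by
      refine ⟨0, ?_⟩
      rintro v ⟨t, rfl⟩
      simp only [hfdef]
      positivity
    refine ⟨⨅ t, f t, ?_⟩
    have h1 := tendsto_atTop_ciInf hanti hbdd
    refine h1.congr' ?_
    filter_upwards [eventually_ge_atTop (0:ℝ)] with t ht
    simp only [hfdef]
    rw [max_eq_left ht]
  have hinner_conv : ∀ z₁ z₂ : H, InSubdiff Φ z₁ (-B z₁) → InSubdiff Φ z₂ (-B z₂) →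
      ∃ c : ℝ, Tendsto (fun t => ⟪x t, z₁ - z₂⟫) atTop (nhds c) := by
    intro z₁ z₂ h1 h2
    obtain ⟨c₁, hc₁⟩ := hconv z₁ h1
    obtain ⟨c₂, hc₂⟩ := hconv z₂ h2
    refine ⟨(c₂ - c₁ - ‖z₂‖ ^ 2 + ‖z₁‖ ^ 2) / 2, ?_⟩
    have h3 : ∀ t, ⟪x t, z₁ - z₂⟫ = (‖x t - z₂‖ ^ 2 - ‖x t - z₁‖ ^ 2 - ‖z₂‖ ^ 2 + ‖z₁‖ ^ 2) / 2 := by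
      intro t
      rw [inner_sub_right]
      rw [norm_sub_sq_real, norm_sub_sq_real]
      ring
    have h4 := (((hc₂.sub hc₁).sub_const (‖z₂‖ ^ 2)).add_const (‖z₁‖ ^ 2)).div_const 2
    refine h4.congr (fun t => (h3 t).symm)

  -- every ultrafilter finer than atTop gives a weak cluster point in S
  have hcluster : ∀ G : Ultrafilter ℝ, (G : Filter ℝ) ≤ atTop →
      ∃ q : H, InSubdiff Φ q (-B q) ∧
        (∀ w : H, Tendsto (fun t => ⟪x t, w⟫) (G : Filter ℝ) (nhds ⟪q, w⟫)) ∧ B q = B z := by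
    intro G hG
    have hxbd : ∀ᶠ t in (G : Filter ℝ), ‖x t‖ ≤ R + ‖z‖ := by
      refine Eventually.filter_mono hG ?_
      filter_upwards [eventually_ge_atTop (0:ℝ)] with t ht
      exact hxnb t ht
    obtain ⟨q, hq⟩ := exists_weak_lim G x (R + ‖z‖) hxbd
    have hDG : Tendsto D (G : Filter ℝ) (nhds 0) := hDto0.mono_left hG
    have hQweak : ∀ w : H, Tendsto (fun t => ⟪Q t, w⟫) (G : Filter ℝ) (nhds ⟪q, w⟫) := by
      intro w
      have h1 : Tendsto (fun t => ⟪D t, w⟫) (G : Filter ℝ) (nhds 0) := by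
        have h2 : Tendsto (fun t => (⟪D t, w⟫ : ℝ)) (G : Filter ℝ) (nhds ⟪(0:H), w⟫) :=
          hDG.inner tendsto_const_nhds
        simpa using h2
      have h3 := (hq w).add h1
      rw [add_zero] at h3
      refine h3.congr (fun t => ?_)
      rw [← inner_add_left]
      congr 1
      simp only [hDdef]
      abel
    -- Step 1 : B q = B z
    have hBq : B q = B z := by
      have hBG : Tendsto (fun t => B (x t)) (G : Filter ℝ) (nhds (B z)) := hBxz.mono_left hG
      have hL : Tendsto (fun t => β * ‖B q - B (x t)‖ ^ 2) (G : Filter ℝ)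
          (nhds (β * ‖B q - B z‖ ^ 2)) := by
        exact ((((tendsto_const_nhds (x := B q)).sub hBG).norm.pow 2).const_mul β)
      have h2 : Tendsto (fun t => ⟪B q - B z, q - x t⟫) (G : Filter ℝ) (nhds 0) := by
        have h3 : ∀ t, ⟪B q - B z, q - x t⟫ = ⟪B q - B z, q⟫ - ⟪x t, B q - B z⟫ := by
          intro t
          rw [inner_sub_right, real_inner_comm (x t) (B q - B z)]
        have h4 := (tendsto_const_nhds (x := (⟪B q - B z, q⟫ : ℝ))).sub (hq (B q - B z))
        have h5 : (⟪B q - B z, q⟫ : ℝ) - ⟪q, B q - B z⟫ = 0 := by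
          rw [real_inner_comm]; ring
        rw [h5] at h4
        exact h4.congr (fun t => (h3 t).symm)
      have h6 : Tendsto (fun t => ⟪B z - B (x t), q - x t⟫) (G : Filter ℝ) (nhds 0) := by
        apply squeeze_zero_norm' (a := fun t => ‖B z - B (x t)‖ * (‖q‖ + (R + ‖z‖)))
        · filter_upwards [hxbd] with t ht
          calc ‖(⟪B z - B (x t), q - x t⟫ : ℝ)‖
              ≤ ‖B z - B (x t)‖ * ‖q - x t‖ := norm_inner_le_norm _ _
            _ ≤ ‖B z - B (x t)‖ * (‖q‖ + (R + ‖z‖)) := by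
                refine mul_le_mul_of_nonneg_left ?_ (norm_nonneg _)
                calc ‖q - x t‖ ≤ ‖q‖ + ‖x t‖ := norm_sub_le _ _
                  _ ≤ ‖q‖ + (R + ‖z‖) := by linarith
        · have h7 : Tendsto (fun t => ‖B z - B (x t)‖) (G : Filter ℝ) (nhds 0) := by
            have h8 := ((tendsto_const_nhds (x := B z)).sub hBG).norm
            simpa using h8
          have h9 := h7.mul_const (‖q‖ + (R + ‖z‖))
          rwa [zero_mul] at h9
      have hR : Tendsto (fun t => ⟪B q - B z, q - x t⟫ + ⟪B z - B (x t), q - x t⟫)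
          (G : Filter ℝ) (nhds 0) := by
        have := h2.add h6
        rwa [add_zero] at this
      have hineq : ∀ᶠ t in (G : Filter ℝ), β * ‖B q - B (x t)‖ ^ 2
          ≤ ⟪B q - B z, q - x t⟫ + ⟪B z - B (x t), q - x t⟫ := by
        refine Eventually.of_forall (fun t => ?_)
        have h7 := hcoco q (x t)
        have h9 : (⟪B q - B (x t), q - x t⟫ : ℝ)
            = ⟪B q - B z, q - x t⟫ + ⟪B z - B (x t), q - x t⟫ := by
          rw [← inner_add_left]
          congr 1
          abel
        rw [h9] at h7
        linarith
      have h10 : β * ‖B q - B z‖ ^ 2 ≤ 0 := le_of_tendsto_of_tendsto hL hR hineq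
      have h11 : ‖B q - B z‖ ^ 2 = 0 := by
        have h12 : ‖B q - B z‖ ^ 2 ≤ 0 := by nlinarith
        have h13 : (0:ℝ) ≤ ‖B q - B z‖ ^ 2 := by positivity
        linarith
      have h14 : ‖B q - B z‖ = 0 := by
        exact pow_eq_zero_iff two_ne_zero |>.1 h11
      rwa [norm_eq_zero, sub_eq_zero] at h14
    -- Step 2 : q ∈ S
    have hqS : InSubdiff Φ q (-B q) := by
      rw [hBq]
      intro y
      set v : ℝ → H := fun t => (1/μ) • ((x t - μ • B (x t)) - Q t) with hvdef
      have hv_eq : ∀ t, v t = -(B (x t)) - (1/μ) • D t := by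
        intro t
        simp only [hvdef, hDdef, hQdef]
        have hμ' : μ ≠ 0 := ne_of_gt hμ0
        match_scalars <;> field_simp
      have hvlim : Tendsto v atTop (nhds (-(B z))) := by
        have h1 := (hBxz.neg).sub (hDto0.const_smul (1/μ))
        rw [smul_zero, sub_zero] at h1
        exact h1.congr (fun t => (hv_eq t).symm)
      have hvG := hvlim.mono_left hG
      have hQbd : ∀ᶠ t in (G : Filter ℝ), ‖Q t‖ ≤ (R + ‖z‖) + MD := by
        refine Eventually.filter_mono hG ?_
        filter_upwards [eventually_ge_atTop (0:ℝ)] with t ht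
        have h1 : Q t = x t + D t := by simp only [hDdef]; abel
        rw [h1]
        calc ‖x t + D t‖ ≤ ‖x t‖ + ‖D t‖ := norm_add_le _ _
          _ ≤ (R + ‖z‖) + MD := add_le_add (hxnb t ht) (hDb t ht)
      have hr : Tendsto (fun t => ⟪v t, y - Q t⟫) (G : Filter ℝ) (nhds ⟪-B z, y - q⟫) := by
        have h1 : Tendsto (fun t => ⟪v t, y⟫) (G : Filter ℝ) (nhds ⟪-B z, y⟫) := by
          have h1' : Tendsto (fun t => (⟪v t, y⟫ : ℝ)) (G : Filter ℝ) (nhds ⟪-(B z), y⟫) :=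
            hvG.inner tendsto_const_nhds
          simpa using h1'
        have h2 : Tendsto (fun t => ⟪v t, Q t⟫) (G : Filter ℝ) (nhds ⟪-B z, q⟫) := by
          have h3 : Tendsto (fun t => ⟪v t + B z, Q t⟫) (G : Filter ℝ) (nhds 0) := by
            apply squeeze_zero_norm' (a := fun t => ‖v t + B z‖ * ((R + ‖z‖) + MD))
            · filter_upwards [hQbd] with t ht
              calc ‖(⟪v t + B z, Q t⟫ : ℝ)‖ ≤ ‖v t + B z‖ * ‖Q t‖ := norm_inner_le_norm _ _
                _ ≤ ‖v t + B z‖ * ((R + ‖z‖) + MD) :=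
                    mul_le_mul_of_nonneg_left ht (norm_nonneg _)
            · have h4 : Tendsto (fun t => ‖v t + B z‖) (G : Filter ℝ) (nhds 0) := by
                have h5 := (hvG.add (tendsto_const_nhds (x := B z))).norm
                simpa using h5
              have h6 := h4.mul_const ((R + ‖z‖) + MD)
              rwa [zero_mul] at h6
          have h7 : Tendsto (fun t => ⟪(-B z : H), Q t⟫) (G : Filter ℝ) (nhds ⟪-B z, q⟫) := by
            have h8 := hQweak (-B z)
            refine h8.congr' ?_ |>.congr (fun t => real_inner_comm _ _) |>.mono_right ?_
            · exact Eventually.of_forall (fun t => rfl)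
            · rw [real_inner_comm]
          have h9 := h3.add h7
          rw [zero_add] at h9
          refine h9.congr (fun t => ?_)
          rw [← inner_add_left]
          congr 1
          abel
        have h10 := h1.sub h2
        rw [← inner_sub_right] at h10
        exact h10.congr (fun t => by rw [inner_sub_right])
      -- limit of Φ(Q t) along G, in the compact space EReal
      obtain ⟨Λ, -, hΛ⟩ := (isCompact_univ (X := EReal)).ultrafilter_le_nhds
        (G.map (fun t => Φ (Q t))) (le_principal_iff.2 univ_mem)
      have hΛ' : Tendsto (fun t => Φ (Q t)) (G : Filter ℝ) (nhds Λ) := by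
        rwa [Ultrafilter.coe_map] at hΛ
      -- weak lower semicontinuity : Φ q ≤ Λ
      have hlsc_q : Φ q ≤ Λ := by
        by_contra hcon
        push_neg at hcon
        obtain ⟨r, hr1, hr2⟩ := EReal.exists_between_coe_real hcon
        have hmemC : ∀ᶠ t in (G : Filter ℝ), Q t ∈ {u : H | Φ u ≤ (r : EReal)} := by
          have h1 := hΛ'.eventually_lt_const hr1
          exact h1.mono (fun t ht => le_of_lt ht)
        have hCc : IsClosed {u : H | Φ u ≤ (r : EReal)} := hlsc.isClosed_preimage r
        have hCconv : Convex ℝ {u : H | Φ u ≤ (r : EReal)} := by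
          intro u hu w hw a b ha hb hab
          have h5 := hconvex u w a b ha hb hab
          refine h5.trans ?_
          have hur : Φ u ≤ (r : EReal) := hu
          have hwr : Φ w ≤ (r : EReal) := hw
          calc (a : EReal) * Φ u + (b : EReal) * Φ w
              ≤ (a : EReal) * (r : EReal) + (b : EReal) * (r : EReal) :=
                add_le_add (mul_le_mul_of_nonneg_left hur (EReal.coe_nonneg.2 ha))
                  (mul_le_mul_of_nonneg_left hwr (EReal.coe_nonneg.2 hb))
            _ = ((a * r + b * r : ℝ) : EReal) := by
                rw [← EReal.coe_mul, ← EReal.coe_mul, ← EReal.coe_add]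
            _ = (r : EReal) := by
                have h6 : a * r + b * r = r := by rw [← add_mul, hab, one_mul]
                exact_mod_cast congrArg (fun u : ℝ => (u : EReal)) h6
        have hqmem : q ∈ {u : H | Φ u ≤ (r : EReal)} := by
          refine mem_of_weak_tendsto (G : Filter ℝ) hCconv hCc (fun w => ?_) hmemC
          have := hQweak w
          refine this.congr (fun t => real_inner_comm _ _) |>.mono_right ?_
          rw [real_inner_comm]
        have : Φ q ≤ (r : EReal) := hqmem
        exact absurd (lt_of_le_of_lt this hr2) (lt_irrefl _)
      -- pass to the limit in the subgradient inequality
      have hmain : Λ + ((⟪-B z, y - q⟫ : ℝ) : EReal) ≤ Φ y := by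
        have hc : ContinuousAt (fun p : EReal × EReal => p.1 + p.2)
            (Λ, ((⟪-B z, y - q⟫ : ℝ) : EReal)) :=
          EReal.continuousAt_add (Or.inr (EReal.coe_ne_bot _)) (Or.inr (EReal.coe_ne_top _))
        have hcoe : Tendsto (fun t => ((⟪v t, y - Q t⟫ : ℝ) : EReal)) (G : Filter ℝ)
            (nhds ((⟪-B z, y - q⟫ : ℝ) : EReal)) :=
          (continuous_coe_real_ereal.tendsto _).comp hr
        have hpair : Tendsto (fun t => ((Φ (Q t), ((⟪v t, y - Q t⟫ : ℝ) : EReal)) : EReal × EReal))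
            (G : Filter ℝ) (nhds (Λ, ((⟪-B z, y - q⟫ : ℝ) : EReal))) :=
          hΛ'.prodMk_nhds hcoe
        have hLHS := hc.tendsto.comp hpair
        refine le_of_tendsto hLHS (Eventually.of_forall (fun t => ?_))
        exact hprox (x t - μ • B (x t)) y
      calc Φ q + ((⟪-B z, y - q⟫ : ℝ) : EReal)
          ≤ Λ + ((⟪-B z, y - q⟫ : ℝ) : EReal) := add_le_add hlsc_q le_rfl
        _ ≤ Φ y := hmain
    exact ⟨q, hqS, hq, hBq⟩

  -- Final assembly (Opial argument via ultrafilters)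
  obtain ⟨xinf, hxinfS, hxinfw, hBxinf⟩ := hcluster (Ultrafilter.of atTop) (Ultrafilter.of_le _)
  refine ⟨xinf, hxinfS, ?_, ?_, hx'to0, hx'int⟩
  · intro w
    rw [tendsto_iff_ultrafilter]
    intro G hG
    obtain ⟨q, hqS, hqw, hBq⟩ := hcluster G hG
    have hq_eq : q = xinf := by
      obtain ⟨c, hc⟩ := hinner_conv xinf q hxinfS hqS
      have e1 : ⟪xinf, xinf - q⟫ = c :=
        tendsto_nhds_unique (hxinfw (xinf - q)) (hc.mono_left (Ultrafilter.of_le _))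
      have e2 : ⟪q, xinf - q⟫ = c :=
        tendsto_nhds_unique (hqw (xinf - q)) (hc.mono_left hG)
      have e3 : ⟪xinf - q, xinf - q⟫ = (0:ℝ) := by
        rw [inner_sub_left]
        linarith
      have e4 : xinf - q = 0 := inner_self_eq_zero.1 e3
      rw [sub_eq_zero] at e4
      exact e4.symm
    rw [hq_eq] at hqw
    exact hqw w
  · rw [hBxinf]
    exact hBxz
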